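/- Let n ≥ 2, h = so(n)-part trivial type-2 algebra: h = h_0 ⋉ g_- ⊆ so(n) ⋉ g_- ⊂ so(1,n+1) indecomposable, and let S ∈ Hom(V, g) with h·S = 0 and T its skew-symmetrization. If R̃ ∈ Λ²V*⊗h satisfies both h·R̃ = 0 and the modified Bianchi identity 𝔖(R̃(u,v)w) = 𝔖(T(T(u,v),w)), then the Levi-Civita-type curvature R(u,v) := R̃(u,v) + S(T(u,v)) + [S(u),S(v)] satisfies ⟨R(v, x)y, z⟩ = 0 for all v ∈ V and x, y, z ∈ e_-^⊥ = V_- ⊕ V_0. -/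

import Mathlib

open scoped BigOperators

attribute [local instance 100] LieRing.ofAssociativeRing

set_option linter.unusedSectionVars false
set_option maxHeartbeats 1000000


/-- Minkowski space `ℝ^{1,n+1}` in a Witt basis, coordinates indexed by `Fin (n+2)`:
index `0` is `e₋`, indices `1,…,n` are the Euclidean directions, index `n+1` is `e₊`. -/
abbrev Vm (n : ℕ) : Type := Fin (n + 2) → ℝ

def lastIx (n : ℕ) : Fin (n + 2) := Fin.last (n + 1)

def midIx (n : ℕ) (i : Fin n) : Fin (n + 2) := ⟨i.1 + 1, by omega⟩

/-- The Minkowski inner product in the Witt basis. -/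
noncomputable def wB (n : ℕ) (u v : Vm n) : ℝ :=
  u 0 * v (lastIx n) + u (lastIx n) * v 0 + ∑ i : Fin n, u (midIx n i) * v (midIx n i)

noncomputable def eMinus (n : ℕ) : Vm n := Pi.single 0 1
noncomputable def ePlus (n : ℕ) : Vm n := Pi.single (lastIx n) 1
noncomputable def eMid (n : ℕ) (i : Fin n) : Vm n := Pi.single (midIx n i) 1

/-- The embedding `ℝⁿ ≃ V₀ ⊆ V`. -/
noncomputable def vmid (n : ℕ) (c : Fin n → ℝ) : Vm n := ∑ i : Fin n, c i • eMid n i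

/-- Membership in `so(1,n+1)`: skew-symmetry with respect to the Minkowski product. -/
def IsSkewB (n : ℕ) (A : Module.End ℝ (Vm n)) : Prop :=
  ∀ u v : Vm n, wB n (A u) v + wB n u (A v) = 0

/-- The element `v̄ ∈ 𝔤₋` associated with `v ∈ ℝⁿ`: `v̄ e₊ = v`, `v̄ eᵢ = -vᵢ e₋`, `v̄ e₋ = 0`. -/
noncomputable def barE (n : ℕ) (v : Fin n → ℝ) : Module.End ℝ (Vm n) :=
  (LinearMap.proj (lastIx n) : Vm n →ₗ[ℝ] ℝ).smulRight (vmid n v)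
    - (∑ i : Fin n, v i • (LinearMap.proj (midIx n i) : Vm n →ₗ[ℝ] ℝ)).smulRight (eMinus n)

/-- The `ℝ`-component of the projection of `X` to `𝔤₀ ≅ ℝ ⊕ so(n)`. -/
noncomputable def piR (n : ℕ) (X : Module.End ℝ (Vm n)) : ℝ :=
  wB n (X (eMinus n)) (ePlus n)

/-- The projection `π₋ : 𝔭 → 𝔤₋ ≅ ℝⁿ`. -/
noncomputable def piMinusE (n : ℕ) (X : Module.End ℝ (Vm n)) : Fin n → ℝ :=
  fun i => wB n (X (ePlus n)) (eMid n i)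

/-- The action of the `𝔤₀ ≅ 𝔠𝔬(n)`-projection `π₀(X)` of `X` on `ℝⁿ`. -/
noncomputable def pi0Act (n : ℕ) (X : Module.End ℝ (Vm n)) (c : Fin n → ℝ) : Fin n → ℝ :=
  fun j => piR n X * c j + ∑ i : Fin n, wB n (X (eMid n i)) (eMid n j) * c i

/-- Membership in the parabolic `𝔭 = stab(ℝ·e₋) ⊆ so(1,n+1)`. -/
def MemP (n : ℕ) (X : Module.End ℝ (Vm n)) : Prop :=
  IsSkewB n X ∧ X (eMinus n) ∈ Submodule.span ℝ {eMinus n}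

/-- Indecomposability: no nondegenerate invariant subspace other than `⊥` and `⊤`. -/
def Indecomp (n : ℕ) (h : LieSubalgebra ℝ (Module.End ℝ (Vm n))) : Prop :=
  ∀ W : Submodule ℝ (Vm n),
    (∀ X ∈ h, ∀ w ∈ W, X w ∈ W) →
    (∀ w ∈ W, (∀ w' ∈ W, wB n w w' = 0) → w = 0) →
    W = ⊥ ∨ W = ⊤

/- ========== Infrastructure ========== -/

section Infra

variable {n : ℕ}

lemma last_ne_zero : lastIx n ≠ 0 := by
  simp [lastIx, Fin.ext_iff]

lemma mid_ne_zero (i : Fin n) : midIx n i ≠ 0 := by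
  simp [midIx, Fin.ext_iff]

lemma mid_ne_last (i : Fin n) : midIx n i ≠ lastIx n := by
  simp [midIx, lastIx, Fin.ext_iff]
  omega

lemma mid_inj {i j : Fin n} : midIx n i = midIx n j ↔ i = j := by
  simp [midIx, Fin.ext_iff]

lemma em_at0 : eMinus n 0 = 1 := by simp [eMinus]
lemma em_atLast : eMinus n (lastIx n) = 0 := by
  simp [eMinus, Pi.single_eq_of_ne last_ne_zero]
lemma em_atMid (i : Fin n) : eMinus n (midIx n i) = 0 := by
  simp [eMinus, Pi.single_eq_of_ne (mid_ne_zero i)]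

lemma ep_at0 : ePlus n 0 = 0 := by
  simp [ePlus, Pi.single_eq_of_ne (Ne.symm last_ne_zero)]
lemma ep_atLast : ePlus n (lastIx n) = 1 := by simp [ePlus]
lemma ep_atMid (i : Fin n) : ePlus n (midIx n i) = 0 := by
  simp [ePlus, Pi.single_eq_of_ne (mid_ne_last i)]

lemma emid_at0 (i : Fin n) : eMid n i 0 = 0 := by
  simp [eMid, Pi.single_eq_of_ne (Ne.symm (mid_ne_zero i))]
lemma emid_atLast (i : Fin n) : eMid n i (lastIx n) = 0 := by
  simp [eMid, Pi.single_eq_of_ne (Ne.symm (mid_ne_last i))]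
lemma emid_atMid (i j : Fin n) : eMid n i (midIx n j) = if j = i then 1 else 0 := by
  simp [eMid, Pi.single_apply, mid_inj]

lemma vmid_at0 (c : Fin n → ℝ) : vmid n c 0 = 0 := by
  simp [vmid, emid_at0]
lemma vmid_atLast (c : Fin n → ℝ) : vmid n c (lastIx n) = 0 := by
  simp [vmid, emid_atLast]
lemma vmid_atMid (c : Fin n → ℝ) (k : Fin n) : vmid n c (midIx n k) = c k := by
  simp [vmid, emid_atMid, Finset.sum_ite_eq]

lemma indexCases (j : Fin (n + 2)) : j = 0 ∨ j = lastIx n ∨ ∃ k : Fin n, j = midIx n k := by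
  rcases j with ⟨jv, hj⟩
  rcases Nat.eq_zero_or_pos jv with h0 | hpos
  · left; simp [Fin.ext_iff, h0]
  · by_cases hl : jv = n + 1
    · right; left; simp [Fin.ext_iff, lastIx, hl]
    · right; right
      refine ⟨⟨jv - 1, by omega⟩, ?_⟩
      simp [Fin.ext_iff, midIx]
      omega

/- wB pairing lemmas -/

lemma wB_em_right (u : Vm n) : wB n u (eMinus n) = u (lastIx n) := by
  simp [wB, em_at0, em_atLast, em_atMid]
lemma wB_em_left (u : Vm n) : wB n (eMinus n) u = u (lastIx n) := by
  simp [wB, em_at0, em_atLast, em_atMid]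
lemma wB_ep_right (u : Vm n) : wB n u (ePlus n) = u 0 := by
  simp [wB, ep_at0, ep_atLast, ep_atMid]
lemma wB_ep_left (u : Vm n) : wB n (ePlus n) u = u 0 := by
  simp [wB, ep_at0, ep_atLast, ep_atMid]
lemma wB_emid_right (u : Vm n) (i : Fin n) : wB n u (eMid n i) = u (midIx n i) := by
  simp [wB, emid_at0, emid_atLast, emid_atMid]
lemma wB_emid_left (u : Vm n) (i : Fin n) : wB n (eMid n i) u = u (midIx n i) := by
  simp [wB, emid_at0, emid_atLast, emid_atMid]

lemma wB_comm (u v : Vm n) : wB n u v = wB n v u := by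
  simp [wB, mul_comm]; ring

lemma wB_zero_right (u : Vm n) : wB n u 0 = 0 := by simp [wB]
lemma wB_zero_left (u : Vm n) : wB n 0 u = 0 := by simp [wB]

lemma wB_add_left (u v z : Vm n) : wB n (u + v) z = wB n u z + wB n v z := by
  simp [wB, add_mul, Finset.sum_add_distrib]; ring
lemma wB_add_right (u v z : Vm n) : wB n z (u + v) = wB n z u + wB n z v := by
  simp [wB, mul_add, Finset.sum_add_distrib]; ring
lemma wB_smul_left (c : ℝ) (u z : Vm n) : wB n (c • u) z = c * wB n u z := by
  simp [wB, Finset.mul_sum, mul_add]; ring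
lemma wB_smul_right (c : ℝ) (u z : Vm n) : wB n z (c • u) = c * wB n z u := by
  simp [wB, Finset.mul_sum, mul_add]; ring

/-- The key vanishing-pairing lemma. -/
lemma wB_null {u z : Vm n} (h1 : u (lastIx n) = 0) (h2 : ∀ k, u (midIx n k) = 0)
    (h3 : z (lastIx n) = 0) : wB n u z = 0 := by
  simp [wB, h1, h2, h3]

/- decomposition lemmas -/

lemma decompFull (u : Vm n) :
    u = u 0 • eMinus n + vmid n (fun i => u (midIx n i)) + u (lastIx n) • ePlus n := by
  funext j
  rcases indexCases j with h | h | ⟨k, h⟩ <;> subst h <;>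
    simp [em_at0, em_atLast, em_atMid, ep_at0, ep_atLast, ep_atMid,
      vmid_at0, vmid_atLast, vmid_atMid]

lemma decompLast {u : Vm n} (h : u (lastIx n) = 0) :
    u = u 0 • eMinus n + vmid n (fun i => u (midIx n i)) := by
  conv_lhs => rw [decompFull u]
  simp [h]

lemma vecE {u : Vm n} (h1 : u (lastIx n) = 0) (h2 : ∀ k, u (midIx n k) = 0) :
    u = u 0 • eMinus n := by
  conv_lhs => rw [decompFull u]
  have h4 : (fun i => u (midIx n i)) = (fun _ : Fin n => (0:ℝ)) := funext h2
  rw [h4, h1]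
  simp [vmid]

lemma vmid_add (c d : Fin n → ℝ) : vmid n (c + d) = vmid n c + vmid n d := by
  simp [vmid, add_smul, Finset.sum_add_distrib]

lemma vmid_smul (a : ℝ) (c : Fin n → ℝ) : vmid n (a • c) = a • vmid n c := by
  simp [vmid, smul_smul, Finset.smul_sum]

lemma vmid_single (i : Fin n) : vmid n (Pi.single i 1) = eMid n i := by
  funext j
  rcases indexCases j with h | h | ⟨k, h⟩ <;> subst h <;>
    simp [vmid_at0, vmid_atLast, vmid_atMid, emid_at0, emid_atLast, emid_atMid,
      Pi.single_apply]

/- barE lemmas -/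

lemma barE_apply (w : Fin n → ℝ) (u : Vm n) :
    barE n w u = u (lastIx n) • vmid n w - (∑ i : Fin n, w i * u (midIx n i)) • eMinus n := by
  simp [barE, LinearMap.smulRight_apply, LinearMap.sub_apply, LinearMap.proj_apply,
    LinearMap.sum_apply, LinearMap.smul_apply, smul_eq_mul]

lemma barE_at0 (w : Fin n → ℝ) (u : Vm n) :
    barE n w u 0 = -∑ i : Fin n, w i * u (midIx n i) := by
  simp [barE_apply, vmid_at0, em_at0]

lemma barE_atMid (w : Fin n → ℝ) (u : Vm n) (k : Fin n) :
    barE n w u (midIx n k) = u (lastIx n) * w k := by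
  simp [barE_apply, vmid_atMid, em_atMid]

lemma barE_atLast (w : Fin n → ℝ) (u : Vm n) :
    barE n w u (lastIx n) = 0 := by
  simp [barE_apply, vmid_atLast, em_atLast]

lemma barE_em (w : Fin n → ℝ) : barE n w (eMinus n) = 0 := by
  simp [barE_apply, em_atLast, em_atMid]

lemma barE_emid (w : Fin n → ℝ) (j : Fin n) : barE n w (eMid n j) = -(w j) • eMinus n := by
  rw [barE_apply]
  simp [emid_atLast, emid_atMid, Finset.sum_ite_eq]

lemma barE_ep (w : Fin n → ℝ) : barE n w (ePlus n) = vmid n w := by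
  rw [barE_apply]
  simp [ep_atLast, ep_atMid]

/- skewness helper -/

lemma skew_pair {X : Module.End ℝ (Vm n)} (hX : IsSkewB n X) (u v : Vm n) :
    wB n (X u) v = - wB n u (X v) := by
  have := hX u v; linarith

end Infra

/- ========== Abstract Euclidean lemma ========== -/

section AbsB

open RealInnerProductSpace

variable {m : ℕ}

lemma absB (B : EuclideanSpace ℝ (Fin m) →ₗ[ℝ] EuclideanSpace ℝ (Fin m) →ₗ[ℝ]
      EuclideanSpace ℝ (Fin m))
    (h1 : ∀ u v w, ⟪B u v, w⟫ = -⟪B u w, v⟫)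
    (h2 : ∀ u v w, ⟪B u v, w⟫ - ⟪B w v, u⟫ + ⟪B v w, u⟫ = 0)
    (h3 : ∀ u v x, B u (B v x) - B v (B u x) = B (B u v) x) :
    B = 0 := by
  set N : Submodule ℝ (EuclideanSpace ℝ (Fin m)) := LinearMap.ker B with hN
  have st1 : ∀ u v, v ∈ N → B u v ∈ N := by
    intro u v hv
    rw [hN, LinearMap.mem_ker] at hv ⊢
    apply LinearMap.ext; intro x
    have h := h3 u v x
    rw [hv] at h
    simpa using h.symm
  have st2 : ∀ u v, B u v + B v u ∈ N := by
    intro u v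
    rw [hN, LinearMap.mem_ker, map_add]
    apply LinearMap.ext; intro x
    have ha := h3 u v x
    have hb := h3 v u x
    simp only [LinearMap.add_apply, LinearMap.zero_apply]
    rw [← ha, ← hb]; abel
  have st3 : ∀ u v, v ∈ Nᗮ → B u v ∈ Nᗮ := by
    intro u v hv
    rw [Submodule.mem_orthogonal]
    intro w hw
    rw [real_inner_comm, h1 u v w]
    have hm : B u w ∈ N := st1 u w hw
    have := (Submodule.mem_orthogonal N v).mp hv (B u w) hm
    simp [this]
  have st4 : ∀ u, u ∈ Nᗮ → B u u = 0 := by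
    intro u hu
    have hmem : B u u ∈ N := by
      have h2x := st2 u u
      have heq : B u u = (1/2 : ℝ) • (B u u + B u u) := by
        rw [smul_add, ← add_smul]; norm_num
      rw [heq]; exact N.smul_mem _ h2x
    have hperp : B u u ∈ Nᗮ := st3 u u hu
    have := (Submodule.mem_orthogonal N (B u u)).mp hperp (B u u) hmem
    exact inner_self_eq_zero.mp this
  have st5 : ∀ u v, u ∈ Nᗮ → v ∈ Nᗮ → B u v = - B v u := by
    intro u v hu hv
    have h := st4 (u + v) (Submodule.add_mem _ hu hv)
    simp only [map_add, LinearMap.add_apply] at h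
    rw [st4 u hu, st4 v hv] at h
    have h' : B u v + B v u = 0 := by
      rw [zero_add, add_zero] at h
      rw [add_comm] at h
      exact h
    exact eq_neg_of_add_eq_zero_left h'
  have st6 : ∀ u v w, u ∈ Nᗮ → v ∈ Nᗮ → w ∈ Nᗮ → ⟪B u v, w⟫ = 0 := by
    intro u v w hu hv hw
    have e1 := h2 u v w
    have e2 := h2 v w u
    have e3 := h2 w u v
    have r1 : ⟪B w v, u⟫ = -⟪B v w, u⟫ := by
      rw [st5 w v hw hv, inner_neg_left]
    have r2 : ⟪B u w, v⟫ = -⟪B w u, v⟫ := by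
      rw [st5 u w hu hw, inner_neg_left]
    have r3 : ⟪B v u, w⟫ = -⟪B u v, w⟫ := by
      rw [st5 v u hv hu, inner_neg_left]
    linarith
  have key : ∀ u v, B u v = 0 := by
    intro u v
    obtain ⟨u0, hu0, u1, hu1, rfl⟩ := N.exists_add_mem_mem_orthogonal u
    obtain ⟨v0, hv0, v1, hv1, rfl⟩ := N.exists_add_mem_mem_orthogonal v
    have hBu0 : B u0 = 0 := LinearMap.mem_ker.mp hu0
    have c1 : B u1 v1 = 0 := by
      have hall : ∀ t, ⟪B u1 v1, t⟫ = 0 := by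
        intro t
        obtain ⟨t0, ht0, t1, ht1, rfl⟩ := N.exists_add_mem_mem_orthogonal t
        rw [inner_add_right]
        have p1 : ⟪B u1 v1, t0⟫ = 0 := by
          rw [h1]
          have hm : B u1 t0 ∈ N := st1 u1 t0 ht0
          have hz := (Submodule.mem_orthogonal N v1).mp hv1 (B u1 t0) hm
          rw [hz]; ring
        have p2 : ⟪B u1 v1, t1⟫ = 0 := st6 u1 v1 t1 hu1 hv1 ht1
        rw [p1, p2]; ring
      have := hall (B u1 v1)
      exact inner_self_eq_zero.mp this
    have c2 : B u1 v0 = 0 := by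
      have hall : ∀ t, ⟪B u1 v0, t⟫ = 0 := by
        intro t
        obtain ⟨t0, ht0, t1, ht1, rfl⟩ := N.exists_add_mem_mem_orthogonal t
        rw [inner_add_right]
        have hm : B u1 v0 ∈ N := st1 u1 v0 hv0
        have p2 : ⟪B u1 v0, t1⟫ = 0 :=
          (Submodule.mem_orthogonal N t1).mp ht1 (B u1 v0) hm
        have p1 : ⟪B u1 v0, t0⟫ = 0 := by
          have e := h2 u1 v0 t0
          have z1 : B t0 = 0 := LinearMap.mem_ker.mp ht0
          have z2 : B v0 = 0 := LinearMap.mem_ker.mp hv0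
          simp only [z1, z2] at e
          simpa using e
        rw [p1, p2]; ring
      exact inner_self_eq_zero.mp (hall (B u1 v0))
    have hB : B (u0 + u1) = B u1 := by rw [map_add, hBu0, zero_add]
    rw [hB, map_add, c2, c1, add_zero]
  apply LinearMap.ext; intro u
  apply LinearMap.ext; intro v
  simpa using key u v

end AbsB

/- ========== Phase 1 : structure of S ========== -/

section Phase1

variable {n : ℕ}

lemma sum_single_mul (k : Fin n) (f : Fin n → ℝ) :
    (∑ i : Fin n, (Pi.single k 1 : Fin n → ℝ) i * f i) = f k := by
  simp [Pi.single_apply]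

lemma exists_ne_fin (hn : 2 ≤ n) (i : Fin n) : ∃ j : Fin n, j ≠ i := by
  refine ⟨if h : i.1 = 0 then ⟨1, by omega⟩ else ⟨0, by omega⟩, ?_⟩
  split_ifs with h0
  · simp [Fin.ext_iff, h0]
  · simp [Fin.ext_iff]; omega

lemma vecZero {u : Vm n} (h0 : u 0 = 0) (h1 : u (lastIx n) = 0)
    (h2 : ∀ k, u (midIx n k) = 0) : u = 0 := by
  funext j
  rcases indexCases j with h | h | ⟨k, h⟩ <;> subst h <;> simp [h0, h1, h2]

/-- components of `u` vanish if `barE w u = 0` for all `w`. -/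
lemma genA (hn : 2 ≤ n) {u : Vm n} (hbz : ∀ w, barE n w u = 0) :
    u (lastIx n) = 0 ∧ ∀ i, u (midIx n i) = 0 := by
  have i0 : Fin n := ⟨0, by omega⟩
  constructor
  · have h := congrFun (hbz (Pi.single i0 1)) (midIx n i0)
    rw [barE_atMid] at h
    simpa using h
  · intro i
    have h := congrFun (hbz (Pi.single i 1)) 0
    rw [barE_at0, sum_single_mul] at h
    simpa using h

lemma phase1 (hn : 2 ≤ n) (S : Vm n →ₗ[ℝ] Module.End ℝ (Vm n))
    (hSk : ∀ v : Vm n, IsSkewB n (S v))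
    (hSB : ∀ (w : Fin n → ℝ) (v u : Vm n),
      barE n w (S v u) - S v (barE n w u) = S (barE n w v) u) :
    S (eMinus n) = 0 ∧
    (∀ i, S (eMid n i) (eMinus n) = 0) ∧
    (∀ i j, S (eMid n i) (eMid n j) (lastIx n) = 0) ∧
    (∀ i j k, S (eMid n i) (eMid n j) (midIx n k) = 0) ∧
    (S (ePlus n) (eMinus n) (lastIx n) = 0) ∧
    (∀ k, S (ePlus n) (eMinus n) (midIx n k) = 0) := by
  have i0 : Fin n := ⟨0, by omega⟩
  -- Step A : Z = S e₋
  have hbzA : ∀ w, barE n w (S (eMinus n) (eMinus n)) = 0 := by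
    intro w
    have h := hSB w (eMinus n) (eMinus n)
    rw [barE_em] at h
    simp only [map_zero, LinearMap.zero_apply, sub_zero] at h
    exact h
  have hAl : S (eMinus n) (eMinus n) (lastIx n) = 0 := (genA hn hbzA).1
  have hAm : ∀ i, S (eMinus n) (eMinus n) (midIx n i) = 0 := (genA hn hbzA).2
  have hA3 : ∀ j, S (eMinus n) (eMid n j) (lastIx n) = 0 := by
    intro j
    have h := skew_pair (hSk (eMinus n)) (eMid n j) (eMinus n)
    rw [wB_em_right, wB_emid_left, hAm j] at h
    simpa using h
  have hA4 : ∀ i j, S (eMinus n) (eMid n j) (midIx n i)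
      = (if j = i then S (eMinus n) (eMinus n) 0 else 0) := by
    intro i j
    have h := congrFun (hSB (Pi.single i 1) (eMinus n) (eMid n j)) 0
    rw [barE_em, barE_emid] at h
    simp only [map_zero, LinearMap.zero_apply, Pi.sub_apply, map_smul, map_neg,
      Pi.smul_apply, Pi.neg_apply, smul_eq_mul, Pi.single_apply] at h
    rw [barE_at0, sum_single_mul] at h
    simp only [Pi.zero_apply] at h
    split_ifs at h ⊢ <;> linarith
  have hA5 : S (eMinus n) (eMinus n) 0 = 0 := by
    have h := hSk (eMinus n) (eMid n i0) (eMid n i0)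
    rw [wB_emid_right, wB_emid_left] at h
    have h4 : S (eMinus n) (eMid n i0) (midIx n i0) = S (eMinus n) (eMinus n) 0 := by
      rw [hA4 i0 i0]; simp
    linarith
  have hSemEm : S (eMinus n) (eMinus n) = 0 := by
    have h := vecE hAl hAm
    rw [hA5] at h
    simpa using h
  have hSemMidC : ∀ i j, S (eMinus n) (eMid n j) (midIx n i) = 0 := by
    intro i j
    rw [hA4, hA5]
    split_ifs <;> rfl
  -- Step B : Z_i = S e_i
  have hbzB : ∀ i w, barE n w (S (eMid n i) (eMinus n)) = 0 := by
    intro i w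
    have h := hSB w (eMid n i) (eMinus n)
    rw [barE_em, barE_emid] at h
    simp only [map_zero, sub_zero, map_smul, map_neg, LinearMap.neg_apply,
      LinearMap.smul_apply, hSemEm, smul_zero, neg_zero] at h
    exact h
  have hBl : ∀ i, S (eMid n i) (eMinus n) (lastIx n) = 0 := fun i => (genA hn (hbzB i)).1
  have hBm : ∀ i j, S (eMid n i) (eMinus n) (midIx n j) = 0 := fun i => (genA hn (hbzB i)).2
  have hB1 : ∀ i j, S (eMid n i) (eMid n j) (lastIx n) = 0 := by
    intro i j
    have h := skew_pair (hSk (eMid n i)) (eMid n j) (eMinus n)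
    rw [wB_em_right, wB_emid_left, hBm i j] at h
    simpa using h
  have hB2 : ∀ i j k, S (eMid n i) (eMid n j) (midIx n k)
      = (if j = k then S (eMid n i) (eMinus n) 0 else 0)
        + (if i = k then S (eMinus n) (eMid n j) 0 else 0) := by
    intro i j k
    have h := congrFun (hSB (Pi.single k 1) (eMid n i) (eMid n j)) 0
    rw [barE_emid, barE_emid] at h
    simp only [Pi.sub_apply, map_smul, map_neg, LinearMap.neg_apply,
      LinearMap.smul_apply, Pi.smul_apply, Pi.neg_apply, smul_eq_mul,
      Pi.single_apply] at h
    rw [barE_at0, sum_single_mul] at h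
    split_ifs at h ⊢ <;> linarith
  have hB3 : ∀ i j k, S (eMid n i) (eMid n j) (midIx n k)
      = - S (eMid n i) (eMid n k) (midIx n j) := by
    intro i j k
    have h := hSk (eMid n i) (eMid n j) (eMid n k)
    rw [wB_emid_right, wB_emid_left] at h
    linarith
  have hB4 : ∀ i, S (eMid n i) (eMinus n) 0 = 0 := by
    intro i
    obtain ⟨j, hj⟩ := exists_ne_fin hn i
    have h3 := hB3 i j j
    have h2 := hB2 i j j
    rw [if_pos rfl, if_neg (Ne.symm hj)] at h2
    linarith
  have hB5 : ∀ j, S (eMinus n) (eMid n j) 0 = 0 := by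
    intro j
    obtain ⟨i, hi⟩ := exists_ne_fin hn j
    have h2a := hB2 i j i
    rw [if_neg (Ne.symm hi), if_pos rfl] at h2a
    have h3 := hB3 i j i
    have h2b := hB2 i i j
    rw [if_neg hi, if_neg hi] at h2b
    linarith
  have hSmM : ∀ i j k, S (eMid n i) (eMid n j) (midIx n k) = 0 := by
    intro i j k
    rw [hB2 i j k, hB4 i, hB5 j]
    split_ifs <;> simp
  have hSmEm : ∀ i, S (eMid n i) (eMinus n) = 0 := by
    intro i
    have h := vecE (hBl i) (hBm i)
    rw [hB4 i] at h
    simpa using h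
  have hSemMid0 : ∀ j, S (eMinus n) (eMid n j) = 0 := by
    intro j
    have h := vecE (hA3 j) (fun i => hSemMidC i j)
    rw [hB5 j] at h
    simpa using h
  have hSemZero : S (eMinus n) = 0 := by
    have hpl : S (eMinus n) (ePlus n) (lastIx n) = 0 := by
      have h := skew_pair (hSk (eMinus n)) (ePlus n) (eMinus n)
      rw [wB_em_right, hSemEm, wB_zero_right] at h
      simpa using h
    have hpm : ∀ k, S (eMinus n) (ePlus n) (midIx n k) = 0 := by
      intro k
      have h := skew_pair (hSk (eMinus n)) (ePlus n) (eMid n k)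
      rw [wB_emid_right, hSemMid0 k, wB_zero_right] at h
      simpa using h
    have hp0 : S (eMinus n) (ePlus n) 0 = 0 := by
      have h := hSk (eMinus n) (ePlus n) (ePlus n)
      rw [wB_ep_right, wB_ep_left] at h
      linarith
    have hZep : S (eMinus n) (ePlus n) = 0 := vecZero hp0 hpl hpm
    apply LinearMap.ext; intro u
    conv_lhs => rw [decompFull u]
    simp [map_add, map_smul, hSemEm, hZep, vmid, map_sum, LinearMap.sum_apply,
      LinearMap.smul_apply, hSemMid0]
  have hbzC : ∀ w, barE n w (S (ePlus n) (eMinus n)) = 0 := by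
    intro w
    have h := hSB w (ePlus n) (eMinus n)
    rw [barE_em, barE_ep] at h
    have hz : S (vmid n w) (eMinus n) = 0 := by
      simp [vmid, map_sum, map_smul, LinearMap.sum_apply, LinearMap.smul_apply, hSmEm]
    rw [hz] at h
    simp only [map_zero, sub_zero] at h
    exact h
  exact ⟨hSemZero, hSmEm, hB1, hSmM, (genA hn hbzC).1, (genA hn hbzC).2⟩

end Phase1

/- ========== General S and T lemmas ========== -/

section STGen

variable {n : ℕ} (hn : 2 ≤ n) (S : Vm n →ₗ[ℝ] Module.End ℝ (Vm n))
  (hSk : ∀ v : Vm n, IsSkewB n (S v))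
  (hSB : ∀ (w : Fin n → ℝ) (v u : Vm n),
    barE n w (S v u) - S v (barE n w u) = S (barE n w v) u)

include hn hSk hSB

lemma S_mid_em (c : Fin n → ℝ) : S (vmid n c) (eMinus n) = 0 := by
  obtain ⟨-, h2, -, -, -, -⟩ := phase1 hn S hSk hSB
  simp [vmid, map_sum, map_smul, LinearMap.sum_apply, LinearMap.smul_apply, h2]

lemma SA {x : Vm n} (hx : x (lastIx n) = 0) : S x (eMinus n) = 0 := by
  obtain ⟨h1, -, -, -, -, -⟩ := phase1 hn S hSk hSB
  rw [decompLast hx]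
  rw [map_add, map_smul]
  simp only [LinearMap.add_apply, LinearMap.smul_apply, h1, LinearMap.zero_apply,
    smul_zero, zero_add]
  exact S_mid_em hn S hSk hSB _

lemma SxLast {x : Vm n} (hx : x (lastIx n) = 0) (y : Vm n) :
    S x y (lastIx n) = 0 := by
  have h := skew_pair (hSk x) y (eMinus n)
  rw [wB_em_right, SA hn S hSk hSB hx, wB_zero_right] at h
  simpa using h

lemma SxEk {x : Vm n} (hx : x (lastIx n) = 0) (k : Fin n) :
    S x (eMid n k) (lastIx n) = 0 ∧ ∀ m, S x (eMid n k) (midIx n m) = 0 := by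
  obtain ⟨h1, -, h3, h4, -, -⟩ := phase1 hn S hSk hSB
  refine ⟨SxLast hn S hSk hSB hx _, ?_⟩
  intro m
  rw [decompLast hx]
  rw [map_add, map_smul]
  simp only [LinearMap.add_apply, LinearMap.smul_apply, h1, LinearMap.zero_apply,
    smul_zero, zero_add, Pi.add_apply, Pi.smul_apply, smul_eq_mul, mul_zero]
  simp [vmid, map_sum, LinearMap.sum_apply, map_smul, LinearMap.smul_apply, h4]

lemma SxMid {x y : Vm n} (hx : x (lastIx n) = 0) (hy : y (lastIx n) = 0) (k : Fin n) :
    S x y (midIx n k) = 0 := by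
  have hek := SxEk hn S hSk hSB hx k
  have h := skew_pair (hSk x) y (eMid n k)
  rw [wB_emid_right, wB_comm] at h
  rw [wB_null hek.1 hek.2 hy] at h
  simpa using h

lemma SvEm (v : Vm n) :
    S v (eMinus n) (lastIx n) = 0 ∧ ∀ k, S v (eMinus n) (midIx n k) = 0 := by
  obtain ⟨h1, -, -, -, h5, h6⟩ := phase1 hn S hSk hSB
  have hd : S v (eMinus n)
      = v (lastIx n) • (S (ePlus n) (eMinus n)) := by
    conv_lhs => rw [decompFull v]
    rw [map_add, map_add, map_smul, map_smul]
    simp only [LinearMap.add_apply, LinearMap.smul_apply, h1, LinearMap.zero_apply,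
      smul_zero, zero_add, S_mid_em hn S hSk hSB]
  constructor
  · rw [hd]; simp [h5]
  · intro k; rw [hd]; simp [h6 k]

/- Torsion lemmas -/

variable (T : Vm n → Vm n → Vm n) (hT : ∀ u v : Vm n, T u v = S v u - S u v)

include hT

lemma T_last {x : Vm n} (hx : x (lastIx n) = 0) (v : Vm n) :
    T v x (lastIx n) = 0 := by
  rw [hT]
  have h1 : S x v (lastIx n) = 0 := SxLast hn S hSk hSB hx v
  have h2 : S v x (lastIx n) = 0 := by
    have h := skew_pair (hSk v) x (eMinus n)
    rw [wB_em_right, wB_comm] at h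
    rw [wB_null (SvEm hn S hSk hSB v).1 (SvEm hn S hSk hSB v).2 hx] at h
    simpa using h
  simp [Pi.sub_apply, h1, h2]

lemma T_mm {x y : Vm n} (hx : x (lastIx n) = 0) (hy : y (lastIx n) = 0) :
    T x y (lastIx n) = 0 ∧ ∀ k, T x y (midIx n k) = 0 := by
  rw [hT]
  constructor
  · simp [Pi.sub_apply, SxLast hn S hSk hSB hx, SxLast hn S hSk hSB hy]
  · intro k
    simp [Pi.sub_apply, SxMid hn S hSk hSB hx hy k, SxMid hn S hSk hSB hy hx k]

lemma T_swap (u v : Vm n) : T u v = - T v u := by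
  rw [hT, hT]; abel

lemma T_em_left {y : Vm n} (hy : y (lastIx n) = 0) : T (eMinus n) y = 0 := by
  obtain ⟨h1, -, -, -, -, -⟩ := phase1 hn S hSk hSB
  rw [hT, SA hn S hSk hSB hy, h1]
  simp

lemma T_em_right {y : Vm n} (hy : y (lastIx n) = 0) : T y (eMinus n) = 0 := by
  obtain ⟨h1, -, -, -, -, -⟩ := phase1 hn S hSk hSB
  rw [hT, SA hn S hSk hSB hy, h1]
  simp

lemma T_scaleEm (c : ℝ) {z : Vm n} (hz : z (lastIx n) = 0) :
    T (c • eMinus n) z = 0 := by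
  obtain ⟨h1, -, -, -, -, -⟩ := phase1 hn S hSk hSB
  rw [hT, map_smul, map_smul, h1]
  simp [SA hn S hSk hSB hz]

lemma T_zero_left (z : Vm n) : T 0 z = 0 := by
  rw [hT]; simp

lemma T_TT_zero {x y z : Vm n} (hx : x (lastIx n) = 0) (hy : y (lastIx n) = 0)
    (hz : z (lastIx n) = 0) : T (T x y) z = 0 := by
  have hmm := T_mm hn S hSk hSB T hT hx hy
  have hv : T x y = (T x y 0) • eMinus n := vecE hmm.1 hmm.2
  rw [hv]
  exact T_scaleEm hn S hSk hSB T hT _ hz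

lemma theta_pair {a b z : Vm n} (ha : a (lastIx n) = 0) (hb : b (lastIx n) = 0)
    (hz : z (lastIx n) = 0) : wB n (T a b) z = 0 := by
  have hmm := T_mm hn S hSk hSB T hT ha hb
  exact wB_null hmm.1 hmm.2 hz

lemma theta_se {x y z : Vm n} (hx : x (lastIx n) = 0) (hy : y (lastIx n) = 0)
    (hz : z (lastIx n) = 0) : wB n (T (T x y) (ePlus n)) z = 0 := by
  obtain ⟨h1, -, -, -, h5, h6⟩ := phase1 hn S hSk hSB
  have hmm := T_mm hn S hSk hSB T hT hx hy
  have hv : T x y = (T x y 0) • eMinus n := vecE hmm.1 hmm.2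
  rw [hT, hv, map_smul, map_smul, h1]
  simp only [LinearMap.smul_apply, LinearMap.zero_apply, smul_zero, sub_zero]
  rw [wB_smul_left, wB_null h5 h6 hz]
  ring

end STGen


/- ========== Curvature lemmas ========== -/

section WBextra

variable {n : ℕ}

lemma wB_neg_left (u z : Vm n) : wB n (-u) z = - wB n u z := by
  simp [wB]; ring

lemma wB_sub_left (u v z : Vm n) : wB n (u - v) z = wB n u z - wB n v z := by
  simp [wB, sub_mul, Finset.sum_sub_distrib]; ring

lemma wB_barE_left (w : Fin n → ℝ) {u z : Vm n} (hu : u (lastIx n) = 0)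
    (hz : z (lastIx n) = 0) : wB n (barE n w u) z = 0 := by
  rw [barE_apply, hu, zero_smul, zero_sub, wB_neg_left, wB_smul_left, wB_em_left, hz]
  ring

lemma barE_lastzero (w : Fin n → ℝ) {y : Vm n} (hy : y (lastIx n) = 0) :
    barE n w y = -(∑ i : Fin n, w i * y (midIx n i)) • eMinus n := by
  rw [barE_apply, hy, zero_smul, zero_sub, neg_smul]

end WBextra

section RGen

variable {n : ℕ} (hn : 2 ≤ n) (S : Vm n →ₗ[ℝ] Module.End ℝ (Vm n))
  (hSk : ∀ v : Vm n, IsSkewB n (S v))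
  (hSB : ∀ (w : Fin n → ℝ) (v u : Vm n),
    barE n w (S v u) - S v (barE n w u) = S (barE n w v) u)
  (T : Vm n → Vm n → Vm n) (hT : ∀ u v : Vm n, T u v = S v u - S u v)
  (Rt : Vm n →ₗ[ℝ] Vm n →ₗ[ℝ] Module.End ℝ (Vm n))
  (hRalt : ∀ u v : Vm n, Rt u v = - Rt v u)
  (hR0 : ∀ a b : Vm n, Rt a b (eMinus n) = 0)
  (hRskw : ∀ a b : Vm n, IsSkewB n (Rt a b))
  (hRB : ∀ (w : Fin n → ℝ) (u v y : Vm n),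
    barE n w (Rt u v y) - Rt u v (barE n w y) = Rt (barE n w u) v y + Rt u (barE n w v) y)
  (hRR : ∀ (a b u v y : Vm n),
    Rt a b (Rt u v y) - Rt u v (Rt a b y) = Rt (Rt a b u) v y + Rt u (Rt a b v) y)
  (hBianchi : ∀ u v w : Vm n,
    (Rt u v) w + (Rt v w) u + (Rt w u) v
      = T (T u v) w + T (T v w) u + T (T w u) v)

include hn hSk hSB hT hRalt hR0 hRskw hRB hRR hBianchi

lemma Rlast (a b y : Vm n) : Rt a b y (lastIx n) = 0 := by
  have h := skew_pair (hRskw a b) y (eMinus n)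
  rw [wB_em_right, hR0, wB_zero_right] at h
  simpa using h

lemma skew2 (a b c d : Vm n) : wB n (Rt a b c) d = - wB n (Rt a b d) c := by
  have h := skew_pair (hRskw a b) c d
  rw [wB_comm c (Rt a b d)] at h
  linarith

lemma alt1 (a b c d : Vm n) : wB n (Rt a b c) d = - wB n (Rt b a c) d := by
  rw [hRalt a b]
  simp [LinearMap.neg_apply, wB_neg_left]

lemma GRb_sym {x y : Vm n} (hx : x (lastIx n) = 0) (hy : y (lastIx n) = 0) :
    Rt (eMinus n) x y = Rt (eMinus n) y x := by
  have hb := hBianchi x y (eMinus n)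
  rw [T_TT_zero hn S hSk hSB T hT hx hy em_atLast] at hb
  rw [T_em_right hn S hSk hSB T hT hy] at hb
  rw [T_em_left hn S hSk hSB T hT hx] at hb
  rw [T_zero_left hn S hSk hSB T hT x, T_zero_left hn S hSk hSB T hT y] at hb
  rw [hR0 x y, hRalt y (eMinus n)] at hb
  simp only [LinearMap.neg_apply, zero_add, add_zero] at hb
  have := neg_add_eq_zero.mp hb
  exact this.symm

lemma GRb {x y z : Vm n} (hx : x (lastIx n) = 0) (hy : y (lastIx n) = 0)
    (hz : z (lastIx n) = 0) : wB n (Rt (eMinus n) x y) z = 0 := by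
  have hs : ∀ a b c : Vm n, wB n (Rt (eMinus n) a b) c = - wB n (Rt (eMinus n) a c) b :=
    fun a b c => skew2 hn S hSk hSB T hT Rt hRalt hR0 hRskw hRB hRR hBianchi (eMinus n) a b c
  have e1 : wB n (Rt (eMinus n) x y) z = wB n (Rt (eMinus n) y x) z := by
    rw [GRb_sym hn S hSk hSB T hT Rt hRalt hR0 hRskw hRB hRR hBianchi hx hy]
  have e2 := hs y x z
  have e3 : wB n (Rt (eMinus n) y z) x = wB n (Rt (eMinus n) z y) x := by
    rw [GRb_sym hn S hSk hSB T hT Rt hRalt hR0 hRskw hRB hRR hBianchi hy hz]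
  have e4 := hs z y x
  have e5 : wB n (Rt (eMinus n) z x) y = wB n (Rt (eMinus n) x z) y := by
    rw [GRb_sym hn S hSk hSB T hT Rt hRalt hR0 hRskw hRB hRR hBianchi hz hx]
  have e6 := hs x z y
  linarith

lemma GRc_vec {x : Vm n} (hx : x (lastIx n) = 0) :
    Rt (ePlus n) (eMinus n) x = - Rt (eMinus n) x (ePlus n) := by
  have hb := hBianchi x (ePlus n) (eMinus n)
  have hxp : T x (ePlus n) (lastIx n) = 0 := by
    rw [T_swap hn S hSk hSB T hT x (ePlus n)]
    simp [T_last hn S hSk hSB T hT hx (ePlus n)]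
  rw [T_em_right hn S hSk hSB T hT hxp] at hb
  have hTpm : T (ePlus n) (eMinus n) = (T (ePlus n) (eMinus n) 0) • eMinus n := by
    apply vecE
    · exact T_last hn S hSk hSB T hT em_atLast (ePlus n)
    · intro k
      obtain ⟨h1, -, -, -, -, h6⟩ := phase1 hn S hSk hSB
      rw [hT]
      simp [Pi.sub_apply, h1, h6 k]
  rw [hTpm, T_scaleEm hn S hSk hSB T hT _ hx] at hb
  rw [T_em_left hn S hSk hSB T hT hx, T_zero_left hn S hSk hSB T hT] at hb
  rw [hR0 x (ePlus n)] at hb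
  simp only [zero_add, add_zero] at hb
  exact eq_neg_of_add_eq_zero_left hb

lemma GRc {x y : Vm n} (hx : x (lastIx n) = 0) (hy : y (lastIx n) = 0) :
    wB n (Rt (ePlus n) (eMinus n) x) y = 0 := by
  have aux : ∀ a b : Vm n, a (lastIx n) = 0 → b (lastIx n) = 0 →
      wB n (Rt (ePlus n) (eMinus n) a) b = wB n (Rt (eMinus n) a b) (ePlus n) := by
    intro a b ha hb
    rw [GRc_vec hn S hSk hSB T hT Rt hRalt hR0 hRskw hRB hRR hBianchi ha, wB_neg_left]
    have h := skew_pair (hRskw (eMinus n) a) (ePlus n) b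
    rw [wB_comm (ePlus n) (Rt (eMinus n) a b)] at h
    linarith
  have a1 := aux x y hx hy
  have a2 := aux y x hy hx
  have a3 : Rt (eMinus n) x y = Rt (eMinus n) y x :=
    GRb_sym hn S hSk hSB T hT Rt hRalt hR0 hRskw hRB hRR hBianchi hx hy
  have a4 : wB n (Rt (ePlus n) (eMinus n) x) y
      = - wB n (Rt (ePlus n) (eMinus n) y) x := by
    have h := skew_pair (hRskw (ePlus n) (eMinus n)) x y
    rw [wB_comm x (Rt (ePlus n) (eMinus n) y)] at h
    linarith
  rw [a3] at a1
  rw [← a2] at a1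
  linarith

lemma GRd {w : Fin n → ℝ} {x y z : Vm n} (hx : x (lastIx n) = 0)
    (hy : y (lastIx n) = 0) (hz : z (lastIx n) = 0) :
    wB n (Rt (vmid n w) x y) z = 0 := by
  have h := hRB w (ePlus n) x y
  rw [barE_ep, barE_lastzero w hy, barE_lastzero w hx] at h
  rw [map_smul, map_smul] at h
  simp only [LinearMap.smul_apply, hR0, smul_zero, sub_zero] at h
  have h2 := congrArg (fun q => wB n q z) h
  simp only [wB_add_left] at h2
  rw [wB_barE_left w (Rlast hn S hSk hSB T hT Rt hRalt hR0 hRskw hRB hRR hBianchi (ePlus n) x y) hz] at h2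
  rw [wB_smul_left, GRc hn S hSk hSB T hT Rt hRalt hR0 hRskw hRB hRR hBianchi hy hz] at h2
  simp only [mul_zero, add_zero, neg_smul, neg_zero, smul_zero, zero_add] at h2
  exact h2.symm

lemma GRf {x y z : Vm n} (hx : x (lastIx n) = 0) (hy : y (lastIx n) = 0)
    (hz : z (lastIx n) = 0) :
    wB n (Rt (ePlus n) x y) z = wB n (Rt y z (ePlus n)) x := by
  have hTel : ∀ a : Vm n, a (lastIx n) = 0 → T (ePlus n) a (lastIx n) = 0 :=
    fun a ha => T_last hn S hSk hSB T hT ha (ePlus n)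
  have hTer : ∀ a : Vm n, a (lastIx n) = 0 → T a (ePlus n) (lastIx n) = 0 := by
    intro a ha
    rw [T_swap hn S hSk hSB T hT a (ePlus n)]
    simp [hTel a ha]
  have t1 : wB n (Rt (ePlus n) x y) z + wB n (Rt x y (ePlus n)) z
      + wB n (Rt y (ePlus n) x) z = 0 := by
    have hb := congrArg (fun q => wB n q z) (hBianchi (ePlus n) x y)
    simp only [wB_add_left] at hb
    rw [theta_pair hn S hSk hSB T hT (hTel x hx) hy hz] at hb
    rw [theta_se hn S hSk hSB T hT hx hy hz] at hb
    rw [theta_pair hn S hSk hSB T hT (hTer y hy) hx hz] at hb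
    simpa using hb
  have t2 : wB n (Rt x y z) (ePlus n) + wB n (Rt y z x) (ePlus n)
      + wB n (Rt z x y) (ePlus n) = 0 := by
    have hb := congrArg (fun q => wB n q (ePlus n)) (hBianchi x y z)
    simp only [wB_add_left] at hb
    rw [T_TT_zero hn S hSk hSB T hT hx hy hz, T_TT_zero hn S hSk hSB T hT hy hz hx,
      T_TT_zero hn S hSk hSB T hT hz hx hy] at hb
    simpa [wB_zero_left] using hb
  have t3 : wB n (Rt y z (ePlus n)) x + wB n (Rt z (ePlus n) y) x
      + wB n (Rt (ePlus n) y z) x = 0 := by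
    have hb := congrArg (fun q => wB n q x) (hBianchi y z (ePlus n))
    simp only [wB_add_left] at hb
    rw [theta_se hn S hSk hSB T hT hy hz hx] at hb
    rw [theta_pair hn S hSk hSB T hT (hTer z hz) hy hx] at hb
    rw [theta_pair hn S hSk hSB T hT (hTel y hy) hz hx] at hb
    simpa using hb
  have t4 : wB n (Rt z (ePlus n) x) y + wB n (Rt (ePlus n) x z) y
      + wB n (Rt x z (ePlus n)) y = 0 := by
    have hb := congrArg (fun q => wB n q y) (hBianchi z (ePlus n) x)
    simp only [wB_add_left] at hb
    rw [theta_pair hn S hSk hSB T hT (hTer z hz) hx hy] at hb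
    rw [theta_pair hn S hSk hSB T hT (hTel x hx) hz hy] at hb
    rw [theta_se hn S hSk hSB T hT hx hz hy] at hb
    simpa using hb
  have f1 := alt1 hn S hSk hSB T hT Rt hRalt hR0 hRskw hRB hRR hBianchi y (ePlus n) x z
  have f2 := skew2 hn S hSk hSB T hT Rt hRalt hR0 hRskw hRB hRR hBianchi x y z (ePlus n)
  have f3 := skew2 hn S hSk hSB T hT Rt hRalt hR0 hRskw hRB hRR hBianchi y z x (ePlus n)
  have f4 := skew2 hn S hSk hSB T hT Rt hRalt hR0 hRskw hRB hRR hBianchi z x y (ePlus n)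
  have f5a := alt1 hn S hSk hSB T hT Rt hRalt hR0 hRskw hRB hRR hBianchi z (ePlus n) y x
  have f5b := skew2 hn S hSk hSB T hT Rt hRalt hR0 hRskw hRB hRR hBianchi (ePlus n) z y x
  have f6 := skew2 hn S hSk hSB T hT Rt hRalt hR0 hRskw hRB hRR hBianchi (ePlus n) y z x
  have f7 := alt1 hn S hSk hSB T hT Rt hRalt hR0 hRskw hRB hRR hBianchi z (ePlus n) x y
  have f8 := skew2 hn S hSk hSB T hT Rt hRalt hR0 hRskw hRB hRR hBianchi (ePlus n) x z y
  have f9 := alt1 hn S hSk hSB T hT Rt hRalt hR0 hRskw hRB hRR hBianchi x z (ePlus n) y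
  linarith

lemma GRh2 {U V W : Vm n} (hU : U (lastIx n) = 0) (hV : V (lastIx n) = 0)
    (hW : W (lastIx n) = 0) :
    wB n (Rt (ePlus n) U V) W - wB n (Rt (ePlus n) W V) U
      + wB n (Rt (ePlus n) V W) U = 0 := by
  have hTel : ∀ a : Vm n, a (lastIx n) = 0 → T (ePlus n) a (lastIx n) = 0 :=
    fun a ha => T_last hn S hSk hSB T hT ha (ePlus n)
  have hTer : ∀ a : Vm n, a (lastIx n) = 0 → T a (ePlus n) (lastIx n) = 0 := by
    intro a ha
    rw [T_swap hn S hSk hSB T hT a (ePlus n)]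
    simp [hTel a ha]
  have t1 : wB n (Rt (ePlus n) V W) U + wB n (Rt V W (ePlus n)) U
      + wB n (Rt W (ePlus n) V) U = 0 := by
    have hb := congrArg (fun q => wB n q U) (hBianchi (ePlus n) V W)
    simp only [wB_add_left] at hb
    rw [theta_pair hn S hSk hSB T hT (hTel V hV) hW hU] at hb
    rw [theta_se hn S hSk hSB T hT hV hW hU] at hb
    rw [theta_pair hn S hSk hSB T hT (hTer W hW) hV hU] at hb
    simpa using hb
  have g1 : wB n (Rt V W (ePlus n)) U = wB n (Rt (ePlus n) U V) W :=
    (GRf hn S hSk hSB T hT Rt hRalt hR0 hRskw hRB hRR hBianchi hU hV hW).symm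
  have g2 := alt1 hn S hSk hSB T hT Rt hRalt hR0 hRskw hRB hRR hBianchi W (ePlus n) V U
  linarith

end RGen

/- ========== Euclidean instantiation ========== -/

section Euc

variable {n : ℕ}

noncomputable def prjE (n : ℕ) : Vm n →ₗ[ℝ] EuclideanSpace ℝ (Fin n) where
  toFun u := WithLp.toLp 2 (fun k => u (midIx n k))
  map_add' u v := rfl
  map_smul' c u := rfl

lemma prjE_apply (u : Vm n) (k : Fin n) : prjE n u k = u (midIx n k) := rfl

lemma wB_vmid_right (q : Vm n) (c : Fin n → ℝ) :
    wB n q (vmid n c) = ∑ k : Fin n, q (midIx n k) * c k := by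
  simp [wB, vmid_at0, vmid_atLast, vmid_atMid]

lemma vmid_addE (a b : EuclideanSpace ℝ (Fin n)) :
    vmid n (WithLp.ofLp (a + b)) = vmid n a + vmid n b := by
  funext j
  rcases indexCases j with h | h | ⟨k, h⟩ <;> subst h <;>
    simp [vmid_at0, vmid_atLast, vmid_atMid, PiLp.add_apply]

lemma vmid_smulE (c : ℝ) (a : EuclideanSpace ℝ (Fin n)) :
    vmid n (WithLp.ofLp (c • a)) = c • vmid n a := by
  funext j
  rcases indexCases j with h | h | ⟨k, h⟩ <;> subst h <;>
    simp [vmid_at0, vmid_atLast, vmid_atMid, PiLp.smul_apply]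

noncomputable def BM {n : ℕ} (Rt : Vm n →ₗ[ℝ] Vm n →ₗ[ℝ] Module.End ℝ (Vm n)) :
    EuclideanSpace ℝ (Fin n) →ₗ[ℝ] EuclideanSpace ℝ (Fin n) →ₗ[ℝ]
      EuclideanSpace ℝ (Fin n) :=
  LinearMap.mk₂ ℝ (fun a b => prjE n (Rt (ePlus n) (vmid n a) (vmid n b)))
    (fun a a' b => by dsimp only; rw [vmid_addE, map_add, LinearMap.add_apply, map_add])
    (fun c a b => by dsimp only; rw [vmid_smulE, map_smul, LinearMap.smul_apply, map_smul])
    (fun a b b' => by dsimp only; rw [vmid_addE, map_add, map_add])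
    (fun c a b => by dsimp only; rw [vmid_smulE, map_smul, map_smul])

lemma BM_apply (Rt : Vm n →ₗ[ℝ] Vm n →ₗ[ℝ] Module.End ℝ (Vm n))
    (a b : EuclideanSpace ℝ (Fin n)) :
    BM Rt a b = prjE n (Rt (ePlus n) (vmid n a) (vmid n b)) := rfl

open RealInnerProductSpace in
lemma innerBM (Rt : Vm n →ₗ[ℝ] Vm n →ₗ[ℝ] Module.End ℝ (Vm n))
    (a b c : EuclideanSpace ℝ (Fin n)) :
    ⟪BM Rt a b, c⟫
      = wB n (Rt (ePlus n) (vmid n a) (vmid n b)) (vmid n c) := by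
  rw [PiLp.inner_apply, wB_vmid_right]
  apply Finset.sum_congr rfl
  intro k _
  rw [BM_apply, prjE_apply]
  simp [RCLike.inner_apply, mul_comm]

end Euc

section RFin

open RealInnerProductSpace

variable {n : ℕ} (hn : 2 ≤ n) (S : Vm n →ₗ[ℝ] Module.End ℝ (Vm n))
  (hSk : ∀ v : Vm n, IsSkewB n (S v))
  (hSB : ∀ (w : Fin n → ℝ) (v u : Vm n),
    barE n w (S v u) - S v (barE n w u) = S (barE n w v) u)
  (T : Vm n → Vm n → Vm n) (hT : ∀ u v : Vm n, T u v = S v u - S u v)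
  (Rt : Vm n →ₗ[ℝ] Vm n →ₗ[ℝ] Module.End ℝ (Vm n))
  (hRalt : ∀ u v : Vm n, Rt u v = - Rt v u)
  (hR0 : ∀ a b : Vm n, Rt a b (eMinus n) = 0)
  (hRskw : ∀ a b : Vm n, IsSkewB n (Rt a b))
  (hRB : ∀ (w : Fin n → ℝ) (u v y : Vm n),
    barE n w (Rt u v y) - Rt u v (barE n w y) = Rt (barE n w u) v y + Rt u (barE n w v) y)
  (hRR : ∀ (a b u v y : Vm n),
    Rt a b (Rt u v y) - Rt u v (Rt a b y) = Rt (Rt a b u) v y + Rt u (Rt a b v) y)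
  (hBianchi : ∀ u v w : Vm n,
    (Rt u v) w + (Rt v w) u + (Rt w u) v
      = T (T u v) w + T (T v w) u + T (T w u) v)

include hn hSk hSB hT hRalt hR0 hRskw hRB hRR hBianchi

lemma L1 (a : Fin n → ℝ) {q : Vm n} (hq : q (lastIx n) = 0) :
    Rt (ePlus n) (vmid n a) (vmid n (fun m => q (midIx n m)))
      = Rt (ePlus n) (vmid n a) q := by
  conv_rhs => rw [decompLast hq]
  rw [map_add, map_smul, hR0]
  simp

lemma GRh3 (u v : Fin n → ℝ) {x : Vm n} (hx : x (lastIx n) = 0) (k : Fin n) :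
    Rt (ePlus n) (vmid n u) (Rt (ePlus n) (vmid n v) x) (midIx n k)
      - Rt (ePlus n) (vmid n v) (Rt (ePlus n) (vmid n u) x) (midIx n k)
    = Rt (ePlus n) (vmid n (fun m => Rt (ePlus n) (vmid n u) (vmid n v) (midIx n m)))
        x (midIx n k) := by
  have h := hRR (ePlus n) (vmid n u) (ePlus n) (vmid n v) x
  have h2 := congrFun h (midIx n k)
  simp only [Pi.sub_apply, Pi.add_apply] at h2
  have r1 : Rt (Rt (ePlus n) (vmid n u) (ePlus n)) (vmid n v) x (midIx n k) = 0 := by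
    have hql : Rt (ePlus n) (vmid n u) (ePlus n) (lastIx n) = 0 :=
      Rlast hn S hSk hSB T hT Rt hRalt hR0 hRskw hRB hRR hBianchi (ePlus n) (vmid n u) (ePlus n)
    conv_lhs => rw [decompLast hql]
    simp only [map_add, map_smul, LinearMap.add_apply, LinearMap.smul_apply,
      Pi.add_apply, Pi.smul_apply, smul_eq_mul]
    have g1 := GRb hn S hSk hSB T hT Rt hRalt hR0 hRskw hRB hRR hBianchi (vmid_atLast v) hx (emid_atLast k)
    rw [wB_emid_right] at g1
    have g2 := GRd hn S hSk hSB T hT Rt hRalt hR0 hRskw hRB hRR hBianchi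
      (w := fun i => Rt (ePlus n) (vmid n u) (ePlus n) (midIx n i))
      (vmid_atLast v) hx (emid_atLast k)
    rw [wB_emid_right] at g2
    rw [g1, g2]
    ring
  have r2 : Rt (ePlus n) (Rt (ePlus n) (vmid n u) (vmid n v)) x (midIx n k)
      = Rt (ePlus n) (vmid n (fun m => Rt (ePlus n) (vmid n u) (vmid n v) (midIx n m)))
          x (midIx n k) := by
    have hql : Rt (ePlus n) (vmid n u) (vmid n v) (lastIx n) = 0 :=
      Rlast hn S hSk hSB T hT Rt hRalt hR0 hRskw hRB hRR hBianchi (ePlus n) (vmid n u) (vmid n v)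
    conv_lhs => rw [decompLast hql]
    simp only [map_add, map_smul, LinearMap.add_apply, LinearMap.smul_apply,
      Pi.add_apply, Pi.smul_apply, smul_eq_mul]
    have g3 := GRc hn S hSk hSB T hT Rt hRalt hR0 hRskw hRB hRR hBianchi hx (emid_atLast k)
    rw [wB_emid_right] at g3
    rw [g3]
    ring
  linarith

lemma BMzero : BM Rt = 0 := by
  apply absB
  · intro a b c
    rw [innerBM, innerBM]
    exact skew2 hn S hSk hSB T hT Rt hRalt hR0 hRskw hRB hRR hBianchi (ePlus n) (vmid n a) (vmid n b) (vmid n c)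
  · intro a b c
    rw [innerBM, innerBM, innerBM]
    exact GRh2 hn S hSk hSB T hT Rt hRalt hR0 hRskw hRB hRR hBianchi (vmid_atLast _) (vmid_atLast _) (vmid_atLast _)
  · intro u v x
    ext k
    have hs : (BM Rt u (BM Rt v x) - BM Rt v (BM Rt u x)) k
        = BM Rt u (BM Rt v x) k - BM Rt v (BM Rt u x) k := rfl
    rw [hs]
    have c1 : BM Rt u (BM Rt v x) k
        = Rt (ePlus n) (vmid n u) (Rt (ePlus n) (vmid n v) (vmid n x)) (midIx n k) := by
      rw [BM_apply, prjE_apply, BM_apply]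
      rw [show vmid n (prjE n (Rt (ePlus n) (vmid n v) (vmid n x)))
            = vmid n (fun m => Rt (ePlus n) (vmid n v) (vmid n x) (midIx n m)) from rfl]
      rw [L1 hn S hSk hSB T hT Rt hRalt hR0 hRskw hRB hRR hBianchi u (Rlast hn S hSk hSB T hT Rt hRalt hR0 hRskw hRB hRR hBianchi (ePlus n) (vmid n v) (vmid n x))]
    have c2 : BM Rt v (BM Rt u x) k
        = Rt (ePlus n) (vmid n v) (Rt (ePlus n) (vmid n u) (vmid n x)) (midIx n k) := by
      rw [BM_apply, prjE_apply, BM_apply]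
      rw [show vmid n (prjE n (Rt (ePlus n) (vmid n u) (vmid n x)))
            = vmid n (fun m => Rt (ePlus n) (vmid n u) (vmid n x) (midIx n m)) from rfl]
      rw [L1 hn S hSk hSB T hT Rt hRalt hR0 hRskw hRB hRR hBianchi v (Rlast hn S hSk hSB T hT Rt hRalt hR0 hRskw hRB hRR hBianchi (ePlus n) (vmid n u) (vmid n x))]
    have c3 : BM Rt (BM Rt u v) x k
        = Rt (ePlus n)
            (vmid n (fun m => Rt (ePlus n) (vmid n u) (vmid n v) (midIx n m)))
            (vmid n x) (midIx n k) := by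
      rw [BM_apply, prjE_apply, BM_apply]
      rw [show vmid n (prjE n (Rt (ePlus n) (vmid n u) (vmid n v)))
            = vmid n (fun m => Rt (ePlus n) (vmid n u) (vmid n v) (midIx n m)) from rfl]
    rw [c1, c2, c3]
    exact GRh3 hn S hSk hSB T hT Rt hRalt hR0 hRskw hRB hRR hBianchi u v (vmid_atLast x) k

lemma Bfinal (u v w : Fin n → ℝ) :
    wB n (Rt (ePlus n) (vmid n u) (vmid n v)) (vmid n w) = 0 := by
  have hz := BMzero hn S hSk hSB T hT Rt hRalt hR0 hRskw hRB hRR hBianchi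
  have h0 : BM Rt (WithLp.toLp 2 u) (WithLp.toLp 2 v) = (0 : EuclideanSpace ℝ (Fin n)) := by
    rw [hz]; rfl
  have hi := innerBM Rt (WithLp.toLp 2 u) (WithLp.toLp 2 v) (WithLp.toLp 2 w)
  rw [h0, inner_zero_left] at hi
  exact hi.symm

lemma GRplus {x y z : Vm n} (hx : x (lastIx n) = 0) (hy : y (lastIx n) = 0)
    (hz : z (lastIx n) = 0) : wB n (Rt (ePlus n) x y) z = 0 := by
  conv_lhs => rw [decompLast hx]
  rw [map_add, map_smul]
  simp only [LinearMap.add_apply, LinearMap.smul_apply]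
  rw [wB_add_left, wB_smul_left, GRc hn S hSk hSB T hT Rt hRalt hR0 hRskw hRB hRR hBianchi hy hz]
  conv_lhs => rw [decompLast hy]
  rw [map_add, map_smul]
  simp only [LinearMap.smul_apply, hR0, smul_zero]
  rw [wB_add_left, wB_zero_left]
  conv_lhs => rw [decompLast hz]
  rw [wB_add_right, wB_smul_right, wB_em_right,
    Rlast hn S hSk hSB T hT Rt hRalt hR0 hRskw hRB hRR hBianchi (ePlus n) (vmid n (fun i => x (midIx n i))) (vmid n (fun i => y (midIx n i)))]
  rw [Bfinal hn S hSk hSB T hT Rt hRalt hR0 hRskw hRB hRR hBianchi]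
  ring

lemma Rfinal (v : Vm n) {x y z : Vm n} (hx : x (lastIx n) = 0)
    (hy : y (lastIx n) = 0) (hz : z (lastIx n) = 0) :
    wB n (Rt v x y) z = 0 := by
  conv_lhs => rw [decompFull v]
  rw [map_add, map_add, map_smul, map_smul]
  simp only [LinearMap.add_apply, LinearMap.smul_apply]
  rw [wB_add_left, wB_add_left, wB_smul_left, wB_smul_left]
  rw [GRb hn S hSk hSB T hT Rt hRalt hR0 hRskw hRB hRR hBianchi hx hy hz, GRd hn S hSk hSB T hT Rt hRalt hR0 hRskw hRB hRR hBianchi hx hy hz, GRplus hn S hSk hSB T hT Rt hRalt hR0 hRskw hRB hRR hBianchi hx hy hz]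
  ring

end RFin
/-- (Algebraic core of the main theorem: pp-wave curvature condition.)
Let `n ≥ 2` and `𝔥 = 𝔥₀ ⋉ 𝔤₋ ⊆ so(n) ⋉ 𝔤₋ ⊂ so(1,n+1)` be indecomposable (type 2), let
`S ∈ Hom(V,𝔤)` with `𝔥·S = 0` and let `T` be its skew-symmetrisation (the torsion).  If
`R̃ ∈ Λ²V*⊗𝔥` satisfies `𝔥·R̃ = 0` and the modified Bianchi identity
`𝔖 R̃(u,v)w = 𝔖 T(T(u,v),w)`, then the Levi-Civita-type curvature
`R(u,v) = R̃(u,v) + S(T(u,v)) + [S(u),S(v)]` satisfies `⟨R(v,x)y,z⟩ = 0` for all `v ∈ V` and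
`x, y, z ∈ e₋^⊥ = V₋ ⊕ V₀`. -/
theorem stmt18 (n : ℕ) (hn : 2 ≤ n) (h : LieSubalgebra ℝ (Module.End ℝ (Vm n)))
    (hsub : ∀ X ∈ h, IsSkewB n X ∧ X (eMinus n) = 0)
    (hgm : ∀ v : Fin n → ℝ, barE n v ∈ h)
    (hind : Indecomp n h)
    (S : Vm n →ₗ[ℝ] Module.End ℝ (Vm n))
    (hSskew : ∀ v : Vm n, IsSkewB n (S v))
    (hSeq : ∀ X ∈ h, ∀ v : Vm n, ⁅X, S v⁆ = S (X v))
    (T : Vm n → Vm n → Vm n)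
    (hT : ∀ u v : Vm n, T u v = S v u - S u v)
    (Rt : Vm n →ₗ[ℝ] Vm n →ₗ[ℝ] Module.End ℝ (Vm n))
    (hRalt : ∀ u v : Vm n, Rt u v = - Rt v u)
    (hRh : ∀ u v : Vm n, Rt u v ∈ h)
    (hReq : ∀ X ∈ h, ∀ u v : Vm n, ⁅X, Rt u v⁆ = Rt (X u) v + Rt u (X v))
    (hBianchi : ∀ u v w : Vm n,
      (Rt u v) w + (Rt v w) u + (Rt w u) v
        = T (T u v) w + T (T v w) u + T (T w u) v) :
    ∀ v x y z : Vm n, x (lastIx n) = 0 → y (lastIx n) = 0 → z (lastIx n) = 0 →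
      wB n ((Rt v x + S (T v x) + ⁅S v, S x⁆) y) z = 0 := by
  intro v x y z hx hy hz
  -- packaged hypotheses
  have hR0' : ∀ a b : Vm n, Rt a b (eMinus n) = 0 := fun a b => (hsub _ (hRh a b)).2
  have hRskw' : ∀ a b : Vm n, IsSkewB n (Rt a b) := fun a b => (hsub _ (hRh a b)).1
  have hSB' : ∀ (w : Fin n → ℝ) (v u : Vm n),
      barE n w (S v u) - S v (barE n w u) = S (barE n w v) u := by
    intro w v' u
    have h := hSeq (barE n w) (hgm w) v'
    rw [Ring.lie_def] at h
    have h2 := LinearMap.congr_fun h u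
    simpa [LinearMap.sub_apply, Module.End.mul_apply] using h2
  have hRB' : ∀ (w : Fin n → ℝ) (u' v' y' : Vm n),
      barE n w (Rt u' v' y') - Rt u' v' (barE n w y')
        = Rt (barE n w u') v' y' + Rt u' (barE n w v') y' := by
    intro w u' v' y'
    have h := hReq (barE n w) (hgm w) u' v'
    rw [Ring.lie_def] at h
    have h2 := LinearMap.congr_fun h y'
    simpa [LinearMap.sub_apply, Module.End.mul_apply, LinearMap.add_apply] using h2
  have hRR' : ∀ (a b u' v' y' : Vm n),
      Rt a b (Rt u' v' y') - Rt u' v' (Rt a b y')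
        = Rt (Rt a b u') v' y' + Rt u' (Rt a b v') y' := by
    intro a b u' v' y'
    have h := hReq (Rt a b) (hRh a b) u' v'
    rw [Ring.lie_def] at h
    have h2 := LinearMap.congr_fun h y'
    simpa [LinearMap.sub_apply, Module.End.mul_apply, LinearMap.add_apply] using h2
  -- expand the goal
  rw [Ring.lie_def]
  simp only [LinearMap.add_apply, LinearMap.sub_apply, Module.End.mul_apply]
  rw [wB_add_left, wB_add_left, wB_sub_left]
  have G1 : wB n (Rt v x y) z = 0 :=
    Rfinal hn S hSskew hSB' T hT Rt hRalt hR0' hRskw' hRB' hRR' hBianchi v hx hy hz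
  have hTvx : T v x (lastIx n) = 0 := T_last hn S hSskew hSB' T hT hx v
  have G2 : wB n (S (T v x) y) z = 0 :=
    wB_null (SxLast hn S hSskew hSB' hTvx y)
      (fun k => SxMid hn S hSskew hSB' hTvx hy k) hz
  have G3a : wB n (S v (S x y)) z = 0 := by
    have hxy : S x y = (S x y 0) • eMinus n :=
      vecE (SxLast hn S hSskew hSB' hx y) (fun k => SxMid hn S hSskew hSB' hx hy k)
    rw [hxy, map_smul, wB_smul_left]
    rw [wB_null (SvEm hn S hSskew hSB' v).1 (SvEm hn S hSskew hSB' v).2 hz]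
    ring
  have G3b : wB n (S x (S v y)) z = 0 := by
    have h := skew_pair (hSskew x) (S v y) z
    have hxz : S x z = (S x z 0) • eMinus n :=
      vecE (SxLast hn S hSskew hSB' hx z) (fun k => SxMid hn S hSskew hSB' hx hz k)
    rw [hxz, wB_smul_right, wB_em_right] at h
    have hvl : S v y (lastIx n) = 0 := by
      have h2 := skew_pair (hSskew v) y (eMinus n)
      rw [wB_em_right, wB_comm] at h2
      rw [wB_null (SvEm hn S hSskew hSB' v).1 (SvEm hn S hSskew hSB' v).2 hy] at h2
      simpa using h2
    rw [hvl] at h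
    simpa using h
  linarith [G1, G2, G3a, G3b]
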